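/- Let Δ be a finite shellable simplicial complex on vertex set S and P a partial order on S. Then the Boolean cell complex Γ(Δ,P) of injective words w with content in Δ that are linear extensions of P restricted to their content is shellable. -/

import Mathlib

set_option linter.unusedSectionVars false
set_option linter.unusedVariables false
set_option maxHeartbeats 1000000
open List

/-- Shellability of a (finite) Boolean cell complex, viewed as a collection
of cells in an ambient face poset, with rank function `rk` (the rank of a cell
is one more than its dimension): either the complex is the full Boolean
lattice of faces of a single cell, or it is pure and there is a cell `σ`
contained in a unique maximal cell `τ` such that the face-deletion of `σ` is
shellable. -/
inductive Shellable {α : Type*} [PartialOrder α] (rk : α → ℕ) : Set α → Prop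
  | simplex (t : α) : Shellable rk (Set.Iic t)
  | step (Γ : Set α) (σ τ : α) (hσ : σ ∈ Γ) (hle : σ ≤ τ)
      (hmax : Maximal (· ∈ Γ) τ)
      (huniq : ∀ τ' : α, Maximal (· ∈ Γ) τ' → σ ≤ τ' → τ' = τ)
      (hpure : ∀ x y : α, Maximal (· ∈ Γ) x → Maximal (· ∈ Γ) y → rk x = rk y)
      (hrec : Shellable rk {x ∈ Γ | ¬ σ ≤ x}) : Shellable rk Γ

/-- Injective words over `S`: lists ordered by the subword (sublist)
relation. -/
def IWord (S : Type*) : Type _ := List S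

/-- The underlying list of an injective word. -/
def IWord.toList {S : Type*} (w : IWord S) : List S := w

instance {S : Type*} : PartialOrder (IWord S) where
  le v w := v.toList.Sublist w.toList
  le_refl w := List.Sublist.refl _
  le_trans _ _ _ := List.Sublist.trans
  le_antisymm _ _ := List.Sublist.antisymm

section Abstract
variable {α : Type*} [PartialOrder α] {rk : α → ℕ}

theorem Shellable.pure {Γ : Set α} (h : Shellable rk Γ) :
    ∀ x y : α, Maximal (· ∈ Γ) x → Maximal (· ∈ Γ) y → rk x = rk y := by
  cases h with
  | simplex t =>
    intro x y hx hy
    have hx' : x = t := le_antisymm hx.1 (hx.2 (le_refl t : t ∈ Set.Iic t) hx.1)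
    have hy' : y = t := le_antisymm hy.1 (hy.2 (le_refl t : t ∈ Set.Iic t) hy.1)
    rw [hx', hy']
  | step Γ σ τ hσ hle hmax huniq hpure hrec => exact hpure

theorem Shellable.nonempty {Γ : Set α} (h : Shellable rk Γ) : Γ.Nonempty := by
  cases h with
  | simplex t => exact ⟨t, le_refl t⟩
  | step Γ σ τ hσ _ _ _ _ _ => exact ⟨σ, hσ⟩

theorem shellable_of_list (Γ₀ : Set α) (N : ℕ)
    (hrigid : ∀ x y : α, x ≤ y → rk x = rk y → x = y)
    (hDC : ∀ x y : α, x ≤ y → y ∈ Γ₀ → x ∈ Γ₀)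
    (hrk₀ : ∀ m, Maximal (· ∈ Γ₀) m → rk m = N)
    (hshell₀ : Γ₀.Nonempty → Shellable rk Γ₀) :
    ∀ L : List (α × α),
    (Γ₀ = ∅ → L ≠ []) →
    (∀ p ∈ L, p.2 ≤ p.1 ∧ rk p.1 = N) →
    (∀ L₁ p L₂, L = L₁ ++ p :: L₂ → ∀ x, x ≤ p.1 →
       ((x ∈ Γ₀ ∨ ∃ q ∈ L₁, x ≤ q.1) ↔ ¬ p.2 ≤ x)) →
    Shellable rk (Γ₀ ∪ {x | ∃ p ∈ L, x ≤ p.1}) := by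
  intro L
  induction L using List.reverseRecOn with
  | nil =>
    intro hne _ _
    have h0 : Γ₀.Nonempty := by
      rcases Set.eq_empty_or_nonempty Γ₀ with h | h
      · exact absurd rfl (hne h)
      · exact h
    have : Γ₀ ∪ {x | ∃ p ∈ ([] : List (α × α)), x ≤ p.1} = Γ₀ := by
      ext x; simp
    rw [this]; exact hshell₀ h0
  | append_singleton L₀ q IH =>
    intro _ hmem hcond
    set σ := q.2 with hσdef
    set τ := q.1 with hτdef
    have hqle : σ ≤ τ := (hmem q (by simp)).1
    have hqrk : rk τ = N := (hmem q (by simp)).2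
    -- the final-split condition
    have hfin : ∀ x, x ≤ τ → ((x ∈ Γ₀ ∨ ∃ p ∈ L₀, x ≤ p.1) ↔ ¬ σ ≤ x) :=
      hcond L₀ q [] rfl
    -- σ is not in the old part
    have hσnew : ¬ (σ ∈ Γ₀ ∨ ∃ p ∈ L₀, σ ≤ p.1) := by
      intro h
      exact ((hfin σ hqle).1 h) (le_refl σ)
    have hσΓ₀ : σ ∉ Γ₀ := fun h => hσnew (Or.inl h)
    have hσL₀ : ∀ p ∈ L₀, ¬ σ ≤ p.1 := fun p hp h => hσnew (Or.inr ⟨p, hp, h⟩)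
    set Γ' : Set α := Γ₀ ∪ {x | ∃ p ∈ L₀, x ≤ p.1} with hΓ'def
    set Γ : Set α := Γ₀ ∪ {x | ∃ p ∈ L₀ ++ [q], x ≤ p.1} with hΓdef
    have hΓeq : Γ = Γ' ∪ Set.Iic τ := by
      ext x
      simp only [hΓdef, hΓ'def, Set.mem_union, Set.mem_setOf_eq, List.mem_append,
        List.mem_singleton, Set.mem_Iic]
      constructor
      · rintro (h | ⟨p, hp | hp, hle⟩)
        · exact Or.inl (Or.inl h)
        · exact Or.inl (Or.inr ⟨p, hp, hle⟩)
        · subst hp; exact Or.inr hle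
      · rintro ((h | ⟨p, hp, hle⟩) | h)
        · exact Or.inl h
        · exact Or.inr ⟨p, Or.inl hp, hle⟩
        · exact Or.inr ⟨q, Or.inr rfl, h⟩
    -- membership facts
    have hτΓ : τ ∈ Γ := Or.inr ⟨q, by simp, le_refl τ⟩
    have hσΓ : σ ∈ Γ := Or.inr ⟨q, by simp, hqle⟩
    -- maximality of τ in Γ
    have hmaxτ : Maximal (· ∈ Γ) τ := by
      constructor
      · exact hτΓ
      · intro y hy hτy
        rcases hy with hy | ⟨p, hp, hyp⟩
        · exact absurd (hDC σ y (le_trans hqle hτy) hy) hσΓ₀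
        · rcases List.mem_append.1 hp with hp | hp
          · exact absurd (le_trans (le_trans hqle hτy) hyp) (hσL₀ p hp)
          · rw [List.mem_singleton] at hp; subst hp
            exact hyp
    -- maximal elements of Γ have rank N
    have hpureΓ : ∀ x, Maximal (· ∈ Γ) x → rk x = N := by
      intro x hx
      rcases hx.1 with hxΓ₀ | ⟨p, hp, hxp⟩
      · refine hrk₀ x ⟨hxΓ₀, fun y hy hxy => hx.2 (Or.inl hy) hxy⟩
      · have hpΓ : p.1 ∈ Γ := Or.inr ⟨p, hp, le_refl _⟩
        have : x = p.1 := le_antisymm hxp (hx.2 hpΓ hxp)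
        rw [this]
        rcases List.mem_append.1 hp with hp | hp
        · exact (hmem p (by simp [hp])).2
        · rw [List.mem_singleton] at hp; subst hp; exact hqrk
    -- uniqueness
    have huniqτ : ∀ τ' : α, Maximal (· ∈ Γ) τ' → σ ≤ τ' → τ' = τ := by
      intro τ' hτ' hστ'
      rcases hτ'.1 with h | ⟨p, hp, hle'⟩
      · exact absurd (hDC σ τ' hστ' h) hσΓ₀
      · have hpΓ : p.1 ∈ Γ := Or.inr ⟨p, hp, le_refl _⟩
        have hτ'p : τ' = p.1 := le_antisymm hle' (hτ'.2 hpΓ hle')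
        rcases List.mem_append.1 hp with hp | hp
        · exact absurd (le_trans hστ' hle') (hσL₀ p hp)
        · rw [List.mem_singleton] at hp; subst hp; exact hτ'p
    -- the deletion
    have hdel : {x ∈ Γ | ¬ σ ≤ x} = Γ' := by
      ext x
      simp only [Set.mem_setOf_eq, hΓ'def, Set.mem_union]
      constructor
      · rintro ⟨hxΓ, hnσ⟩
        rcases hxΓ with h | ⟨p, hp, hle'⟩
        · exact Or.inl h
        · rcases List.mem_append.1 hp with hp | hp
          · exact Or.inr ⟨p, hp, hle'⟩
          · rw [List.mem_singleton] at hp; subst hp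
            exact (hfin x hle').2 hnσ
      · rintro (h | ⟨p, hp, hle'⟩)
        · refine ⟨Or.inl h, fun hσx => hσΓ₀ (hDC σ x hσx h)⟩
        · refine ⟨Or.inr ⟨p, List.mem_append.2 (Or.inl hp), hle'⟩,
            fun hσx => hσL₀ p hp (le_trans hσx hle')⟩
    by_cases hbase : L₀ = [] ∧ Γ₀ = ∅
    · -- simplex case
      obtain ⟨h1, h2⟩ := hbase
      have : Γ = Set.Iic τ := by
        subst h1 h2
        rw [hΓeq]
        simp [hΓ'def]
      show Shellable rk Γ
      rw [this]
      exact Shellable.simplex τ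
    · -- step case
      have hrec : Shellable rk Γ' := by
        apply IH
        · intro h0
          intro hL0
          exact hbase ⟨hL0, h0⟩
        · intro p hp; exact hmem p (List.mem_append.2 (Or.inl hp))
        · intro L₁ p L₂ hsplit x hx
          exact hcond L₁ p (L₂ ++ [q]) (by rw [hsplit]; simp) x hx
      rw [← hdel] at hrec
      exact Shellable.step Γ σ τ hσΓ hqle hmaxτ huniqτ
        (fun x y hx hy => (hpureΓ x hx).trans (hpureΓ y hy).symm) hrec

end Abstract

section Words
variable {S : Type*} [DecidableEq S] [PartialOrder S]

/-- Admissible (injective, `P`-increasing) words. -/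
def Adm (x : List S) : Prop := x.Nodup ∧ x.Pairwise (fun a b => ¬ b < a)

theorem Adm.sublist {x y : List S} (h : x <+ y) (hy : Adm y) : Adm x :=
  ⟨hy.1.sublist h, hy.2.sublist h⟩

theorem adm_nil : Adm ([] : List S) := ⟨List.nodup_nil, List.Pairwise.nil⟩

theorem sub_toFinset_subset {x y : List S} (h : x <+ y) : x.toFinset ⊆ y.toFinset :=
  fun b hb => List.mem_toFinset.2 (h.subset (List.mem_toFinset.1 hb))

/-- Insert one new letter into an admissible word. -/
theorem adm_insert : ∀ (x : List S), Adm x → ∀ {e : S}, e ∉ x →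
    ∃ x', Adm x' ∧ x <+ x' ∧ x'.toFinset = insert e x.toFinset ∧
      x'.length = x.length + 1
  | [], _, e, _ => ⟨[e], ⟨by simp, by simp⟩, by simp, by simp, by simp⟩
  | g :: tl, hx, e, he => by
    by_cases h : e < g
    · refine ⟨e :: g :: tl, ⟨?_, ?_⟩, List.sublist_cons_self e _, by simp, by simp⟩
      · exact List.nodup_cons.2 ⟨he, hx.1⟩
      · rw [List.pairwise_cons]
        refine ⟨?_, hx.2⟩
        intro b hb
        rcases List.mem_cons.1 hb with rfl | hb
        · exact asymm h
        · intro hbe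
          exact (List.rel_of_pairwise_cons hx.2 hb) (lt_trans hbe h)
    · have hetl : e ∉ tl := fun h' => he (List.mem_cons_of_mem g h')
      obtain ⟨tl', htl'adm, htl'sub, htl'fin, htl'len⟩ :=
        adm_insert tl ⟨(List.nodup_cons.1 hx.1).2, (List.pairwise_cons.1 hx.2).2⟩ hetl
      have hmem' : ∀ b, b ∈ tl' → b = e ∨ b ∈ tl := by
        intro b hb
        have : b ∈ tl'.toFinset := List.mem_toFinset.2 hb
        rw [htl'fin] at this
        simp only [Finset.mem_insert, List.mem_toFinset] at this
        exact this
      refine ⟨g :: tl', ⟨?_, ?_⟩, ?_, ?_, by simp [htl'len]⟩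
      · refine List.nodup_cons.2 ⟨?_, htl'adm.1⟩
        intro hg
        rcases hmem' g hg with rfl | hg'
        · exact he (List.mem_cons_self (a := g) (l := tl))
        · exact (List.nodup_cons.1 hx.1).1 hg'
      · rw [List.pairwise_cons]
        refine ⟨?_, htl'adm.2⟩
        intro b hb
        rcases hmem' b hb with rfl | hb'
        · exact h
        · exact List.rel_of_pairwise_cons hx.2 hb'
      · exact List.Sublist.cons₂ g htl'sub
      · rw [List.toFinset_cons, htl'fin, List.toFinset_cons]
        exact (Finset.insert_comm g e tl.toFinset)

/-- Any admissible word with content inside `F` extends to an admissible word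
with content exactly `F`. -/
theorem adm_extend (F : Finset S) : ∀ n (x : List S), Adm x → x.toFinset ⊆ F →
    n = F.card - x.length →
    ∃ u, Adm u ∧ u.toFinset = F ∧ u.length = F.card ∧ x <+ u := by
  intro n
  induction n with
  | zero =>
    intro x hx hsub hn
    have hlen : x.length = x.toFinset.card := (List.toFinset_card_of_nodup hx.1).symm
    have hle : x.toFinset.card ≤ F.card := Finset.card_le_card hsub
    have hcard : x.toFinset.card = F.card := by omega
    have : x.toFinset = F := Finset.eq_of_subset_of_card_le hsub (le_of_eq hcard.symm)
    exact ⟨x, hx, this, by omega, List.Sublist.refl x⟩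
  | succ n IH =>
    intro x hx hsub hn
    have hlen : x.length = x.toFinset.card := (List.toFinset_card_of_nodup hx.1).symm
    have hne : x.toFinset ≠ F := by
      intro h
      rw [h] at hlen
      omega
    obtain ⟨e, heF, hex⟩ := Finset.exists_of_ssubset (lt_of_le_of_ne hsub hne)
    obtain ⟨x', hx', hsubx, htf, hlen'⟩ := adm_insert x hx (by simpa using hex)
    obtain ⟨u, hu1, hu2, hu3, hu4⟩ := IH x' hx'
      (by rw [htf]; exact Finset.insert_subset heF hsub)
      (by rw [hlen']; omega)
    exact ⟨u, hu1, hu2, hu3, hsubx.trans hu4⟩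

theorem adm_cover {F : Finset S} {x : List S} (hx : Adm x) (hsub : x.toFinset ⊆ F) :
    ∃ u, Adm u ∧ u.toFinset = F ∧ u.length = F.card ∧ x <+ u :=
  adm_extend F _ x hx hsub rfl

/-- The head of a full admissible word on `F` is minimal in `F`. -/
theorem head_minimal {F : Finset S} {a : S} {y : List S}
    (h : Adm (a :: y)) (hc : (a :: y).toFinset = F) : ∀ b ∈ F, ¬ b < a := by
  intro b hbF hba
  rw [← hc] at hbF
  simp only [List.toFinset_cons, Finset.mem_insert, List.mem_toFinset] at hbF
  rcases hbF with rfl | hby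
  · exact lt_irrefl _ hba
  · exact (List.rel_of_pairwise_cons h.2 hby) hba

end Words

section Firsts
variable {S : Type*} [DecidableEq S] [PartialOrder S]

theorem sub_cons_of_mem {x w : List S} {a : S} (h : x <+ a :: w) (haw : a ∉ w)
    (hax : a ∈ x) : ∃ y, x = a :: y ∧ y <+ w := by
  rcases List.sublist_cons_iff.1 h with h' | ⟨r, rfl, hr⟩
  · exact absurd (h'.subset hax) haw
  · exact ⟨r, rfl, hr⟩

theorem sub_cons_of_not_mem {x w : List S} {a : S} (h : x <+ a :: w) (hax : a ∉ x) :
    x <+ w := by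
  rcases List.sublist_cons_iff.1 h with h' | ⟨r, rfl, hr⟩
  · exact h'
  · exact absurd (List.mem_cons_self (a := a) (l := r)) hax

theorem head_of_sub_cons {x w : List S} {a : S} (h : x <+ a :: w) (haw : a ∉ w)
    (hax : a ∈ x) : x.head? = some a := by
  obtain ⟨y, rfl, -⟩ := sub_cons_of_mem h haw hax
  rfl

/-- Possible first letters of words between `r` and `w` in subword order. -/
def Firsts (w r : List S) : Set S := {c | ∃ x, x <+ w ∧ r <+ x ∧ x.head? = some c}

theorem mem_firsts {w r : List S} {c : S} {x' : List S} (hxw : (c :: x') <+ w)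
    (hrx : r <+ (c :: x')) : c ∈ Firsts w r := ⟨c :: x', hxw, hrx, rfl⟩

theorem firsts_cons_cons {w r : List S} {a : S} (haw : a ∉ w) (hrw : r <+ w) :
    Firsts (a :: w) (a :: r) = {a} := by
  ext c
  simp only [Set.mem_singleton_iff]
  constructor
  · rintro ⟨x, hxw, hrx, hc⟩
    have hax : a ∈ x := hrx.subset (List.mem_cons_self (a := a) (l := r))
    rw [head_of_sub_cons hxw haw hax] at hc
    exact (Option.some_inj.1 hc).symm
  · intro hc
    exact ⟨a :: r, List.cons_sublist_cons.2 hrw, List.Sublist.refl _, by rw [hc]; rfl⟩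

theorem firsts_cons_of_not_mem {w r : List S} {a : S} (haw : a ∉ w) (har : a ∉ r)
    (hrw : r <+ w) : Firsts (a :: w) r = insert a (Firsts w r) := by
  ext c
  simp only [Set.mem_insert_iff]
  constructor
  · rintro ⟨x, hxw, hrx, hc⟩
    by_cases hax : a ∈ x
    · rw [head_of_sub_cons hxw haw hax] at hc
      exact Or.inl (Option.some_inj.1 hc).symm
    · exact Or.inr ⟨x, sub_cons_of_not_mem hxw hax, hrx, hc⟩
  · rintro (hc | ⟨x, hxw, hrx, hc⟩)
    · refine ⟨a :: r, List.cons_sublist_cons.2 hrw, ?_, by rw [hc]; rfl⟩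
      exact List.sublist_cons_self a r
    · exact ⟨x, hxw.trans (List.sublist_cons_self a w), hrx, hc⟩

theorem sub_of_sub_cons_not_mem {r x : List S} {a : S} (h : r <+ a :: x) (har : a ∉ r) :
    r <+ x := sub_cons_of_not_mem h har

end Firsts

section Level
variable {S : Type*} [DecidableEq S] [PartialOrder S]

/-- The package of properties of a shelling list of the full words on `F`
relative to the restriction set `R`. -/
def LevelPkg (F R : Finset S) (L : List (List S × List S)) : Prop :=
  L ≠ [] ∧
  (∀ p ∈ L, Adm p.1 ∧ p.1.toFinset = F ∧ p.1.length = F.card ∧ p.2 <+ p.1) ∧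
  (∀ u, Adm u → u.toFinset = F → u.length = F.card → ∃ p ∈ L, p.1 = u) ∧
  (∀ L₁ p L₂, L = L₁ ++ p :: L₂ → ∀ x, x <+ p.1 →
    ((R ⊆ x.toFinset ∧ ∀ q ∈ L₁, ¬ x <+ q.1) ↔ p.2 <+ x)) ∧
  (∀ p ∈ L, p.2 = [] ∨ (∃ h, Firsts p.1 p.2 = {h}) ∨
    (∀ c ∈ Firsts p.1 p.2, ¬(c ∈ R ∧ ∀ b ∈ F, ¬ b < c)))

/-- The package for a partial (suffix) family of blocks, relative to the set `M`
of already-processed minimal letters. -/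
def BlocksPkg (F R M : Finset S) (ms : List S) (L : List (List S × List S)) : Prop :=
  (ms ≠ [] → L ≠ []) ∧
  (∀ p ∈ L, Adm p.1 ∧ p.1.toFinset = F ∧ p.1.length = F.card ∧ p.2 <+ p.1 ∧
    ∃ a ∈ ms, p.1.head? = some a) ∧
  (∀ u a, Adm u → u.toFinset = F → u.length = F.card → u.head? = some a → a ∈ ms →
    ∃ p ∈ L, p.1 = u) ∧
  (∀ L₁ p L₂, L = L₁ ++ p :: L₂ → ∀ x, x <+ p.1 →
    ((R ⊆ x.toFinset ∧ (∀ b ∈ M, b ∈ x.toFinset ∧ x.head? ≠ some b) ∧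
      ∀ q ∈ L₁, ¬ x <+ q.1) ↔ p.2 <+ x)) ∧
  (∀ p ∈ L, p.2 = [] ∨ (∃ h, Firsts p.1 p.2 = {h}) ∨
    (∀ c ∈ Firsts p.1 p.2, ¬(c ∈ R ∧ ∀ b ∈ F, ¬ b < c)))

theorem firsts_mem_left {w r : List S} {c : S} (h : c ∈ Firsts w r) : c ∈ w := by
  obtain ⟨x, hxw, -, hc⟩ := h
  match x, hc with
  | c' :: x', hc =>
    have : c' = c := by simpa using hc
    subst this
    exact hxw.subset (List.mem_cons_self)

theorem blocks_lemma (F R : Finset S) (hRF : R ⊆ F)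
    (OIH : ∀ (G Q : Finset S), G.card < F.card → Q ⊆ G → ∃ L, LevelPkg G Q L) :
    ∀ (ms : List S) (M : Finset S), ms.Nodup →
    (∀ a ∈ ms, a ∈ F) → (∀ a ∈ ms, ∀ b ∈ F, ¬ b < a) →
    (∀ a ∈ ms, a ∉ M) → (M ⊆ F) → (∀ a ∈ M, ∀ b ∈ F, ¬ b < a) →
    (∀ b ∈ R, (∀ c ∈ F, ¬ c < b) → (b ∈ M ∨ b ∈ ms)) →
    (∀ l₁ a l₂, ms = l₁ ++ a :: l₂ → a ∉ R → ∀ b ∈ l₂, b ∉ R) →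
    ∃ L, BlocksPkg F R M ms L := by
  classical
  intro ms
  induction ms with
  | nil =>
    intro M _ _ _ _ _ _ _ _
    refine ⟨[], fun h => absurd rfl h, by simp, ?_, ?_, by simp⟩
    · intro u a _ _ _ _ h
      exact absurd h (List.not_mem_nil (a := a))
    · intro L₁ p L₂ h
      exfalso
      have := congrArg List.length h
      simp at this
  | cons a rest IHms =>
    intro M hnd h2 h3 h4 h5 h6 h7 h8
    have haF : a ∈ F := h2 a (List.mem_cons_self (a := a) (l := rest))
    have hamin : ∀ b ∈ F, ¬ b < a := h3 a (List.mem_cons_self (a := a) (l := rest))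
    have haM : a ∉ M := h4 a (List.mem_cons_self (a := a) (l := rest))
    have harest : a ∉ rest := (List.nodup_cons.1 hnd).1
    set G := F.erase a with hGdef
    set R2 := (R.erase a) ∪ M with hR2def
    have hGF : G ⊆ F := Finset.erase_subset a F
    have hGcard : G.card < F.card := Finset.card_erase_lt_of_mem haF
    have haG : a ∉ G := Finset.notMem_erase a F
    have hR2G : R2 ⊆ G := by
      rw [hR2def]
      refine Finset.union_subset ?_ ?_
      · intro b hb
        rw [Finset.mem_erase] at hb ⊢
        exact ⟨hb.1, hRF hb.2⟩
      · intro b hb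
        rw [Finset.mem_erase]
        exact ⟨fun h => haM (h ▸ hb), h5 hb⟩
    obtain ⟨Ls, hs1, hs2, hs3, hs4, hs5⟩ := OIH G R2 hGcard hR2G
    have hcov : ∀ x : List S, Adm x → x.toFinset ⊆ G → ∃ p ∈ Ls, x <+ p.1 := by
      intro x hx hxG
      obtain ⟨u, hu1, hu2, hu3, hu4⟩ := adm_cover hx hxG
      obtain ⟨p, hp, hpu⟩ := hs3 u hu1 hu2 hu3
      exact ⟨p, hp, hpu ▸ hu4⟩
    have hnotmemW : ∀ p ∈ Ls, a ∉ p.1 := by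
      intro p hp hmem
      exact haG ((hs2 p hp).2.1 ▸ List.mem_toFinset.2 hmem)
    have hnotmemR : ∀ p ∈ Ls, a ∉ p.2 := by
      intro p hp hmem
      exact hnotmemW p hp ((hs2 p hp).2.2.2.subset hmem)
    -- key: if a ∉ R then every minimal element of F belonging to R is in M
    have hRmin : a ∉ R → ∀ b ∈ R, (∀ c ∈ F, ¬ c < b) → b ∈ M := by
      intro haR b hbR hbmin
      rcases h7 b hbR hbmin with h | h
      · exact h
      · rcases List.mem_cons.1 h with rfl | h
        · exact absurd hbR haR
        · exact absurd hbR (h8 [] a rest rfl haR b h)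
    -- the branch map
    set br : List S × List S → List S × List S := fun p =>
      (a :: p.1, if a ∈ R ∨ (p.2 ≠ [] ∧ Firsts p.1 p.2 ⊆ (↑M : Set S)) then a :: p.2 else p.2)
      with hbrdef
    set La := Ls.map br with hLadef
    -- facts about La entries
    have hLa2 : ∀ q ∈ Ls, Adm (a :: q.1) ∧ (a :: q.1).toFinset = F ∧
        (a :: q.1).length = F.card ∧ (br q).2 <+ a :: q.1 := by
      intro q hq
      obtain ⟨⟨hqnd, hqpw⟩, hqfin, hqlen, hqsub⟩ := hs2 q hq
      refine ⟨⟨?_, ?_⟩, ?_, ?_, ?_⟩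
      · exact List.nodup_cons.2 ⟨hnotmemW q hq, hqnd⟩
      · rw [List.pairwise_cons]
        refine ⟨?_, hqpw⟩
        intro b hb
        exact hamin b (hGF (hqfin ▸ List.mem_toFinset.2 hb))
      · rw [List.toFinset_cons, hqfin, hGdef]
        exact Finset.insert_erase haF
      · have h1 : F.card ≠ 0 := Finset.card_ne_zero_of_mem haF
        have h2 : G.card = F.card - 1 := Finset.card_erase_of_mem haF
        simp only [List.length_cons, hqlen]
        omega
      · rw [hbrdef]
        by_cases hc : a ∈ R ∨ (q.2 ≠ [] ∧ Firsts q.1 q.2 ⊆ (↑M : Set S))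
        · simp only [hc, if_pos]
          exact List.cons_sublist_cons.2 hqsub
        · simp only [hc, if_neg, not_false_iff]
          exact hqsub.trans (List.sublist_cons_self a q.1)
    -- induction for the rest
    obtain ⟨Lr, hr1, hr2, hr3, hr4, hr5⟩ := IHms (insert a M)
      (List.nodup_cons.1 hnd).2
      (fun b hb => h2 b (List.mem_cons_of_mem a hb))
      (fun b hb => h3 b (List.mem_cons_of_mem a hb))
      (by
        intro b hb
        simp only [Finset.mem_insert, not_or]
        exact ⟨fun h => harest (h ▸ hb), h4 b (List.mem_cons_of_mem a hb)⟩)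
      (Finset.insert_subset haF h5)
      (by
        intro b hb
        rcases Finset.mem_insert.1 hb with rfl | hb
        · exact hamin
        · exact h6 b hb)
      (by
        intro b hbR hbmin
        rcases h7 b hbR hbmin with h | h
        · exact Or.inl (Finset.mem_insert.2 (Or.inr h))
        · rcases List.mem_cons.1 h with rfl | h
          · exact Or.inl (Finset.mem_insert_self b M)
          · exact Or.inr h)
      (fun l₁ b l₂ hsp => h8 (a :: l₁) b l₂ (by rw [hsp]; rfl))
    -- the translation lemma
    have hT1 : ∀ x : List S, Adm x → x.toFinset ⊆ F →
        ((∃ q ∈ La, x <+ q.1) ↔ (a ∉ x ∨ x.head? = some a)) := by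
      intro x hxadm hxF
      constructor
      · rintro ⟨q, hq, hxq⟩
        rw [hLadef, List.mem_map] at hq
        obtain ⟨qs, hqs, rfl⟩ := hq
        by_cases hax : a ∈ x
        · exact Or.inr (head_of_sub_cons hxq (hnotmemW qs hqs) hax)
        · exact Or.inl hax
      · rintro (hax | hhead)
        · have : x.toFinset ⊆ G := by
            rw [hGdef, Finset.subset_erase]
            exact ⟨hxF, fun h => hax (List.mem_toFinset.1 h)⟩
          obtain ⟨q, hq, hxq⟩ := hcov x hxadm this
          exact ⟨br q, List.mem_map_of_mem (f := br) hq, hxq.trans (List.sublist_cons_self a q.1)⟩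
        · match x, hhead with
          | c :: y, hhead =>
            have hca : c = a := by simpa using hhead
            subst hca
            have hyadm : Adm y := Adm.sublist (List.sublist_cons_self c y) hxadm
            have hcy : c ∉ y := (List.nodup_cons.1 hxadm.1).1
            have : y.toFinset ⊆ G := by
              rw [hGdef, Finset.subset_erase]
              constructor
              · exact fun b hb => hxF (by simp [List.mem_toFinset.1 hb])
              · exact fun h => hcy (List.mem_toFinset.1 h)
            obtain ⟨q, hq, hyq⟩ := hcov y hyadm this
            exact ⟨br q, List.mem_map_of_mem (f := br) hq, List.cons_sublist_cons.2 hyq⟩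
    refine ⟨La ++ Lr, ?_, ?_, ?_, ?_, ?_⟩
    · -- nonemptiness
      intro _
      rw [hLadef]
      intro h
      rcases List.append_eq_nil_iff.1 h with ⟨h1, -⟩
      exact hs1 (List.map_eq_nil_iff.1 h1)
    · -- g2
      intro p hp
      rcases List.mem_append.1 hp with hp | hp
      · rw [hLadef, List.mem_map] at hp
        obtain ⟨qs, hqs, rfl⟩ := hp
        obtain ⟨ha1, ha2, ha3, ha4⟩ := hLa2 qs hqs
        exact ⟨ha1, ha2, ha3, ha4, a, List.mem_cons_self (a := a) (l := rest), rfl⟩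
      · obtain ⟨g1, g2, g3, g4, b, hb, hbh⟩ := hr2 p hp
        exact ⟨g1, g2, g3, g4, b, List.mem_cons_of_mem a hb, hbh⟩
    · -- g3 completeness
      intro u c hu hufin hulen hhead hcms
      rcases List.mem_cons.1 hcms with rfl | hcrest
      · match u, hhead with
        | c' :: y, hhead =>
          have hca : c' = c := by simpa using hhead
          subst hca
          have hyadm : Adm y := Adm.sublist (List.sublist_cons_self c' y) hu
          have hcy : c' ∉ y := (List.nodup_cons.1 hu.1).1
          have hyfin : y.toFinset = G := by
            rw [hGdef, ← hufin]
            rw [List.toFinset_cons]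
            rw [Finset.erase_insert]
            exact fun h => hcy (List.mem_toFinset.1 h)
          have hylen : y.length = G.card := by
            have h2 : G.card = F.card - 1 := Finset.card_erase_of_mem haF
            have : (c' :: y).length = F.card := hulen
            simp only [List.length_cons] at this
            omega
          obtain ⟨q, hq, hq1⟩ := hs3 y hyadm hyfin hylen
          refine ⟨br q, List.mem_append.2 (Or.inl (List.mem_map_of_mem (f := br) hq)), ?_⟩
          rw [hbrdef]
          simp only
          rw [hq1]
      · obtain ⟨p, hp, hpu⟩ := hr3 u c hu hufin hulen hhead hcrest
        exact ⟨p, List.mem_append.2 (Or.inr hp), hpu⟩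
    · -- g4 interval
      intro L₁ p L₂ hsplit x hx
      -- helper : in-Lr case
      have inLr : ∀ t, L₁ = La ++ t → Lr = t ++ p :: L₂ →
          ((R ⊆ x.toFinset ∧ (∀ b ∈ M, b ∈ x.toFinset ∧ x.head? ≠ some b) ∧
            ∀ q ∈ L₁, ¬ x <+ q.1) ↔ p.2 <+ x) := by
        intro t hL₁eq hLreq
        have hpLr : p ∈ Lr := by rw [hLreq]; simp
        obtain ⟨hpadm, hpfin, -, -, -⟩ := hr2 p hpLr
        have hxadm : Adm x := Adm.sublist hx hpadm
        have hxF : x.toFinset ⊆ F := hpfin ▸ sub_toFinset_subset hx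
        have hmain := hr4 t p L₂ hLreq x hx
        rw [← hmain]
        have hTx := hT1 x hxadm hxF
        constructor
        · rintro ⟨hR, hM, hq⟩
          have hqLa : ∀ q ∈ La, ¬ x <+ q.1 := fun q hq' =>
            hq q (hL₁eq ▸ List.mem_append.2 (Or.inl hq'))
          have hnot : ¬ (a ∉ x ∨ x.head? = some a) := by
            intro h
            obtain ⟨q, hq', hxq⟩ := hTx.2 h
            exact hqLa q hq' hxq
          push_neg at hnot
          refine ⟨hR, ?_, fun q hq' => hq q (hL₁eq ▸ List.mem_append.2 (Or.inr hq'))⟩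
          intro b hb
          rcases Finset.mem_insert.1 hb with rfl | hb
          · exact ⟨List.mem_toFinset.2 (hnot.1), hnot.2⟩
          · exact hM b hb
        · rintro ⟨hR, hM, hq⟩
          refine ⟨hR, ?_, ?_⟩
          · intro b hb
            exact hM b (Finset.mem_insert.2 (Or.inr hb))
          · intro q hq'
            rw [hL₁eq, List.mem_append] at hq'
            rcases hq' with hq' | hq'
            · intro hxq
              have := hTx.1 ⟨q, hq', hxq⟩
              have hhA := hM a (Finset.mem_insert_self a M)
              rcases this with h | h
              · exact h (List.mem_toFinset.1 hhA.1)
              · exact hhA.2 h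
            · exact hq q hq'
      rcases List.append_eq_append_iff.1 hsplit with ⟨t, hL₁eq, hLreq⟩ | ⟨t, hLaeq, ht⟩
      · exact inLr t hL₁eq hLreq
      · cases t with
        | nil =>
          simp only [List.append_nil] at hLaeq
          simp only [List.nil_append] at ht
          exact inLr [] (by rw [hLaeq, List.append_nil]) ht.symm
        | cons p' t' =>
          rw [List.cons_append] at ht
          injection ht with ht1 ht2
          subst ht1
          -- p is in La; split Ls accordingly
          rw [hLadef] at hLaeq
          obtain ⟨ls₁, ls₂, hLs, hmap1, hmap2⟩ := List.map_eq_append_iff.1 hLaeq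
          obtain ⟨qs, ls₂', rfl, hbrqs, hmap3⟩ := List.map_eq_cons_iff.1 hmap2
          obtain ⟨⟨hwnd, hwpw⟩, hwfin, hwlen, hrsub⟩ := hs2 qs (by rw [hLs]; simp)
          have hawn : a ∉ qs.1 := hnotmemW qs (by rw [hLs]; simp)
          have harn : a ∉ qs.2 := hnotmemR qs (by rw [hLs]; simp)
          have hp1 : p.1 = a :: qs.1 := by rw [← hbrqs, hbrdef]
          have hsub4 := hs4 ls₁ qs ls₂' hLs
          have hCtr : ∀ y : List S, (∀ q ∈ L₁, ¬ y <+ q.1) ↔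
              (∀ qj ∈ ls₁, ¬ (y <+ a :: qj.1)) := by
            intro y
            constructor
            · intro h qj hqj hyq
              exact h (br qj) (by rw [← hmap1]; exact List.mem_map_of_mem (f := br) hqj) hyq
            · intro h q hq hyq
              rw [← hmap1, List.mem_map] at hq
              obtain ⟨qj, hqj, rfl⟩ := hq
              exact h qj hqj hyq
          rw [hp1] at hx
          by_cases hax : a ∈ x
          · -- x starts with a
            obtain ⟨y, rfl, hyw⟩ := sub_cons_of_mem hx hawn hax
            have hyaset : (a :: y).toFinset = insert a y.toFinset := List.toFinset_cons
            have hI1 : R ⊆ (a :: y).toFinset ↔ R.erase a ⊆ y.toFinset := by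
              rw [hyaset, Finset.subset_insert_iff]
            have hay : a ∉ y := by
              have : (a :: y).Nodup := ((hLa2 qs (by rw [hLs]; simp)).1.1).sublist hx
              exact (List.nodup_cons.1 this).1
            have hI2 : (∀ b ∈ M, b ∈ (a :: y).toFinset ∧ (a :: y).head? ≠ some b) ↔
                M ⊆ y.toFinset := by
              constructor
              · intro h b hb
                have := (h b hb).1
                rw [hyaset, Finset.mem_insert] at this
                rcases this with rfl | h'
                · exact absurd hb haM
                · exact h'
              · intro h b hb
                refine ⟨by rw [hyaset]; exact Finset.mem_insert_of_mem (h hb), ?_⟩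
                simp only [List.head?_cons, ne_eq, Option.some.injEq]
                exact fun hba => haM (hba ▸ hb)
            have hI3 : (∀ q ∈ L₁, ¬ (a :: y) <+ q.1) ↔ (∀ qj ∈ ls₁, ¬ y <+ qj.1) := by
              rw [hCtr]
              constructor
              · intro h qj hqj hyq
                exact h qj hqj (List.cons_sublist_cons.2 hyq)
              · intro h qj hqj hyq
                exact h qj hqj (List.cons_sublist_cons.1 hyq)
            have hmain := hsub4 y hyw
            have hR2y : R2 ⊆ y.toFinset ↔ (R.erase a ⊆ y.toFinset ∧ M ⊆ y.toFinset) := by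
              rw [hR2def, Finset.union_subset_iff]
            constructor
            · rintro ⟨c1, c2, c3⟩
              have hry : qs.2 <+ y := hmain.1 ⟨hR2y.2 ⟨hI1.1 c1, hI2.1 c2⟩, hI3.1 c3⟩
              rw [← hbrqs, hbrdef]
              simp only
              by_cases hcond : a ∈ R ∨ (qs.2 ≠ [] ∧ Firsts qs.1 qs.2 ⊆ (↑M : Set S))
              · rw [if_pos hcond]
                exact List.cons_sublist_cons.2 hry
              · rw [if_neg hcond]
                exact hry.trans (List.sublist_cons_self a y)
            · intro hrx
              have hry : qs.2 <+ y := by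
                rw [← hbrqs, hbrdef] at hrx
                simp only at hrx
                by_cases hcond : a ∈ R ∨ (qs.2 ≠ [] ∧ Firsts qs.1 qs.2 ⊆ (↑M : Set S))
                · rw [if_pos hcond] at hrx
                  exact List.cons_sublist_cons.1 hrx
                · rw [if_neg hcond] at hrx
                  exact sub_cons_of_not_mem hrx harn
              obtain ⟨d1, d2⟩ := hmain.2 hry
              rw [hR2y] at d1
              exact ⟨hI1.2 d1.1, hI2.2 d1.2, hI3.2 d2⟩
          · -- a ∉ x
            have hxw : x <+ qs.1 := sub_cons_of_not_mem hx hax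
            have hxG : x.toFinset ⊆ G := hwfin ▸ sub_toFinset_subset hxw
            have haxf : a ∉ x.toFinset := fun h => hax (List.mem_toFinset.1 h)
            have hCx : (∀ q ∈ L₁, ¬ x <+ q.1) ↔ (∀ qj ∈ ls₁, ¬ x <+ qj.1) := by
              rw [hCtr]
              constructor
              · intro h qj hqj hyq
                exact h qj hqj (hyq.trans (List.sublist_cons_self a qj.1))
              · intro h qj hqj hyq
                exact h qj hqj (sub_cons_of_not_mem hyq hax)
            by_cases haR : a ∈ R
            · -- LHS and RHS both false
              apply iff_of_false
              · rintro ⟨c1, -, -⟩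
                exact haxf (c1 haR)
              · intro hrx
                rw [← hbrqs, hbrdef] at hrx
                simp only at hrx
                rw [if_pos (Or.inl haR)] at hrx
                exact hax (hrx.subset (List.mem_cons_self (a := a) (l := qs.2)))
            · -- a ∉ R
              have hResub : R.erase a = R := Finset.erase_eq_of_notMem haR
              have hmain := hsub4 x hxw
              have hR2x : R2 ⊆ x.toFinset ↔ (R ⊆ x.toFinset ∧ M ⊆ x.toFinset) := by
                rw [hR2def, Finset.union_subset_iff, hResub]
              have hMc : (∀ b ∈ M, b ∈ x.toFinset ∧ x.head? ≠ some b) ↔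
                  (M ⊆ x.toFinset ∧ ∀ b ∈ M, x.head? ≠ some b) := by
                constructor
                · intro h
                  exact ⟨fun b hb => (h b hb).1, fun b hb => (h b hb).2⟩
                · intro h b hb
                  exact ⟨h.1 hb, h.2 b hb⟩
              have hLHS : (R ⊆ x.toFinset ∧
                  (∀ b ∈ M, b ∈ x.toFinset ∧ x.head? ≠ some b) ∧
                  ∀ q ∈ L₁, ¬ x <+ q.1) ↔
                  (qs.2 <+ x ∧ ∀ b ∈ M, x.head? ≠ some b) := by
                constructor
                · rintro ⟨c1, c2, c3⟩
                  obtain ⟨cM, cH⟩ := hMc.1 c2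
                  exact ⟨hmain.1 ⟨hR2x.2 ⟨c1, cM⟩, (hCx.1 c3)⟩, cH⟩
                · rintro ⟨hr, hc⟩
                  obtain ⟨d1, d2⟩ := hmain.2 hr
                  obtain ⟨dR, dM⟩ := hR2x.1 d1
                  exact ⟨dR, hMc.2 ⟨dM, hc⟩, hCx.2 d2⟩
              rw [hLHS]
              by_cases hrnil : qs.2 = []
              · -- the first word of the sub-list : everything is new
                have hcond : ¬ (a ∈ R ∨ (qs.2 ≠ [] ∧ Firsts qs.1 qs.2 ⊆ (↑M : Set S))) := by
                  simp [haR, hrnil]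
                have hM0 : ∀ b : S, b ∈ M → False := by
                  have h0 := (hsub4 [] (List.nil_sublist qs.1)).2 (by rw [hrnil])
                  intro b hb
                  have : b ∈ ([] : List S).toFinset := h0.1 (Finset.mem_union_right _ hb)
                  simpa using this
                apply iff_of_true
                · exact ⟨by rw [hrnil]; exact List.nil_sublist x,
                    fun b hb => absurd hb (fun h => hM0 b h)⟩
                · rw [← hbrqs]
                  simp only [hbrdef, if_neg hcond]
                  rw [hrnil]
                  exact List.nil_sublist x
              · by_cases hFsub : Firsts qs.1 qs.2 ⊆ (↑M : Set S)
                · -- restriction gets the extra letter a ; nothing without a is new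
                  have hcond : a ∈ R ∨ (qs.2 ≠ [] ∧ Firsts qs.1 qs.2 ⊆ (↑M : Set S)) :=
                    Or.inr ⟨hrnil, hFsub⟩
                  apply iff_of_false
                  · rintro ⟨hr, hc⟩
                    have hxne : x ≠ [] := by
                      intro h
                      rw [h] at hr
                      exact hrnil (List.eq_nil_of_sublist_nil hr)
                    obtain ⟨c, x', rfl⟩ : ∃ c x', x = c :: x' := by
                      cases x with
                      | nil => exact absurd rfl hxne
                      | cons c x' => exact ⟨c, x', rfl⟩
                    have hcF : c ∈ Firsts qs.1 qs.2 := mem_firsts hxw hr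
                    have hcM : c ∈ M := by exact_mod_cast hFsub hcF
                    exact hc c hcM rfl
                  · intro hrx
                    rw [← hbrqs] at hrx
                    simp only [hbrdef, if_pos hcond] at hrx
                    exact hax (hrx.subset (List.mem_cons_self (a := a) (l := qs.2)))
                · -- restriction stays ; firsts are disjoint from M
                  have hcond : ¬ (a ∈ R ∨ (qs.2 ≠ [] ∧ Firsts qs.1 qs.2 ⊆ (↑M : Set S))) := by
                    simp only [not_or]
                    exact ⟨haR, fun h => hFsub h.2⟩
                  have hdisj : ∀ c ∈ Firsts qs.1 qs.2, c ∉ M := by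
                    rcases hs5 qs (by rw [hLs]; simp) with h | ⟨h0, hFeq⟩ | hd3
                    · exact absurd h hrnil
                    · intro c hc hcM
                      rw [hFeq, Set.mem_singleton_iff] at hc
                      subst hc
                      apply hFsub
                      rw [hFeq]
                      intro z hz
                      rw [Set.mem_singleton_iff] at hz
                      subst hz
                      exact_mod_cast hcM
                    · intro c hc hcM
                      refine hd3 c hc ⟨Finset.mem_union_right _ hcM, ?_⟩
                      intro b hb
                      exact h6 c hcM b (hGF hb)
                  have himp : qs.2 <+ x → ∀ b ∈ M, x.head? ≠ some b := by
                    intro hr b hb heq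
                    have hxne : x ≠ [] := by
                      intro h
                      rw [h] at hr
                      exact hrnil (List.eq_nil_of_sublist_nil hr)
                    obtain ⟨c, x', rfl⟩ : ∃ c x', x = c :: x' := by
                      cases x with
                      | nil => exact absurd rfl hxne
                      | cons c x' => exact ⟨c, x', rfl⟩
                    have hcF : c ∈ Firsts qs.1 qs.2 := mem_firsts hxw hr
                    have : c = b := by simpa using heq
                    exact hdisj c hcF (this ▸ hb)
                  rw [← hbrqs]
                  simp only [hbrdef, if_neg hcond]
                  constructor
                  · exact fun h => h.1
                  · exact fun h => ⟨h, himp h⟩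
    · -- g5 INV
      intro p hp
      rcases List.mem_append.1 hp with hp | hp
      · rw [hLadef, List.mem_map] at hp
        obtain ⟨qs, hqs, rfl⟩ := hp
        obtain ⟨-, -, -, hrsub⟩ := hs2 qs hqs
        have hawn : a ∉ qs.1 := hnotmemW qs hqs
        have harn : a ∉ qs.2 := hnotmemR qs hqs
        by_cases hcond : a ∈ R ∨ (qs.2 ≠ [] ∧ Firsts qs.1 qs.2 ⊆ (↑M : Set S))
        · right; left
          refine ⟨a, ?_⟩
          show Firsts (br qs).1 (br qs).2 = {a}
          simp only [hbrdef, if_pos hcond]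
          exact firsts_cons_cons hawn hrsub
        · by_cases hrnil : qs.2 = []
          · left
            simp only [hbrdef, if_neg hcond]
            exact hrnil
          · right; right
            have haR : a ∉ R := fun h => hcond (Or.inl h)
            have hFsub : ¬ Firsts qs.1 qs.2 ⊆ (↑M : Set S) :=
              fun h => hcond (Or.inr ⟨hrnil, h⟩)
            intro c hc hcRmin
            obtain ⟨hcR, hcmin⟩ := hcRmin
            have hc' : c ∈ Firsts (a :: qs.1) qs.2 := by
              simpa only [hbrdef, if_neg hcond] using hc
            rw [firsts_cons_of_not_mem hawn harn hrsub] at hc'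
            rw [Set.mem_insert_iff] at hc'
            rcases hc' with rfl | hc'
            · exact haR hcR
            · have hcw : c ∈ qs.1 := firsts_mem_left hc'
              have hca : c ≠ a := fun h => hawn (h ▸ hcw)
              have hcG : ∀ b ∈ G, ¬ b < c := fun b hb => hcmin b (hGF hb)
              have hcR2 : c ∈ R2 := Finset.mem_union_left _ (Finset.mem_erase.2 ⟨hca, hcR⟩)
              rcases hs5 qs hqs with h | ⟨h0, hFeq⟩ | hd3
              · exact hrnil h
              · have hch0 : c = h0 := by
                  rw [hFeq, Set.mem_singleton_iff] at hc'
                  exact hc'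
                subst hch0
                have hcM : c ∈ M := hRmin haR c hcR hcmin
                apply hFsub
                rw [hFeq]
                intro z hz
                rw [Set.mem_singleton_iff] at hz
                subst hz
                exact_mod_cast hcM
              · exact hd3 c hc' ⟨hcR2, hcG⟩
      · exact hr5 p hp


theorem level_list : ∀ (n : ℕ) (F R : Finset S), F.card = n → R ⊆ F →
    ∃ L, LevelPkg F R L := by
  intro n
  induction n using Nat.strong_induction_on with
  | _ n OIH =>
  intro F R hcard hRF
  classical
  rcases Finset.eq_empty_or_nonempty F with rfl | hFne
  · -- empty case
    have hR : R = ∅ := Finset.subset_empty.1 hRF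
    subst hR
    refine ⟨[([], [])], by simp, ?_, ?_, ?_, ?_⟩
    · intro p hp
      rw [List.mem_singleton] at hp
      subst hp
      exact ⟨⟨List.nodup_nil, List.Pairwise.nil⟩, by simp, by simp, List.Sublist.refl _⟩
    · intro u hu hufin hulen
      refine ⟨([], []), List.mem_singleton_self _, ?_⟩
      have : u.length = 0 := by simpa using hulen
      exact (List.length_eq_zero_iff.1 this).symm
    · rintro L₁ p L₂ hsplit x hx
      cases L₁ with
      | cons q L₁' =>
        exfalso
        have := congrArg List.length hsplit
        simp at this
      | nil =>
        have hp : p = ([], []) := by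
          have := congrArg List.head? hsplit
          simpa using this.symm
        subst hp
        have hx0 : x = [] := List.eq_nil_of_sublist_nil hx
        subst hx0
        simp
    · intro p hp
      rw [List.mem_singleton] at hp
      subst hp
      exact Or.inl rfl
  · -- nonempty case
    set mins : Finset S := F.filter (fun c => ∀ b ∈ F, ¬ b < c) with hminsdef
    have hminsub : ∀ c ∈ mins, c ∈ F ∧ ∀ b ∈ F, ¬ b < c := by
      intro c hc
      simpa [hminsdef] using (Finset.mem_filter.1 hc)
    set ms : List S := (mins.filter (fun c => c ∈ R)).toList ++
      (mins.filter (fun c => c ∉ R)).toList with hmsdef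
    have hmsmem : ∀ a, a ∈ ms ↔ a ∈ mins := by
      intro a
      simp only [hmsdef, List.mem_append, Finset.mem_toList, Finset.mem_filter]
      by_cases h : a ∈ R <;> simp [h]
    have hmsnodup : ms.Nodup := by
      refine List.Nodup.append (Finset.nodup_toList _) (Finset.nodup_toList _) ?_
      intro a ha hb
      rw [Finset.mem_toList, Finset.mem_filter] at ha hb
      exact hb.2 ha.2
    obtain ⟨L, hBL⟩ := blocks_lemma F R hRF
      (by
        intro G Q hGF hQG
        exact OIH G.card (by omega) G Q rfl hQG)
      ms ∅ hmsnodup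
      (fun a ha => (hminsub a ((hmsmem a).1 ha)).1)
      (fun a ha => (hminsub a ((hmsmem a).1 ha)).2)
      (by simp)
      (by simp)
      (by simp)
      (by
        intro b hbR hbmin
        refine Or.inr ((hmsmem b).2 ?_)
        rw [hminsdef, Finset.mem_filter]
        exact ⟨hRF hbR, hbmin⟩)
      (by
        rw [hmsdef]
        intro l₁ a l₂ hsplit haR b hb hbR
        rcases List.append_eq_append_iff.1 hsplit with ⟨t, h1, h2⟩ | ⟨t, h1, h2⟩
        · -- second part = t ++ a :: l₂
          have : b ∈ (mins.filter (fun c => c ∉ R)).toList := by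
            rw [h2]
            simp only [List.mem_append, List.mem_cons]
            exact Or.inr (Or.inr hb)
          rw [Finset.mem_toList, Finset.mem_filter] at this
          exact this.2 hbR
        · cases t with
          | nil =>
            simp only [List.nil_append] at h2
            have : b ∈ (mins.filter (fun c => c ∉ R)).toList := by
              rw [← h2]
              exact List.mem_cons_of_mem a hb
            rw [Finset.mem_toList, Finset.mem_filter] at this
            exact this.2 hbR
          | cons c t' =>
            have hc : a = c := by
              have := congrArg List.head? h2
              simpa using this
            have haA : a ∈ (mins.filter (fun c => c ∈ R)).toList := by
              rw [h1, hc]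
              simp
            rw [Finset.mem_toList, Finset.mem_filter] at haA
            exact haR haA.2)
    obtain ⟨hg1, hg2, hg3, hg4, hg5⟩ := hBL
    have hmsne : ms ≠ [] := by
      obtain ⟨a, ha⟩ := hFne
      obtain ⟨b, -, hbmin⟩ := F.finite_toSet.exists_le_minimal ha
      have hbms : b ∈ ms := by
        rw [hmsmem, hminsdef, Finset.mem_filter]
        exact ⟨hbmin.1, fun c hc hlt => Minimal.not_lt hbmin hc hlt⟩
      intro h
      rw [h] at hbms
      exact absurd hbms (List.not_mem_nil (a := b))
    refine ⟨L, hg1 hmsne, fun p hp => ⟨(hg2 p hp).1, (hg2 p hp).2.1, (hg2 p hp).2.2.1,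
      (hg2 p hp).2.2.2.1⟩, ?_, ?_, hg5⟩
    · -- completeness
      intro u hu hufin hulen
      have hune : u ≠ [] := by
        intro h
        subst h
        simp only [List.length_nil] at hulen
        have := Finset.card_ne_zero_of_mem hFne.choose_spec
        omega
      match u, hune with
      | c :: y, _ =>
        have hcmin : ∀ b ∈ F, ¬ b < c := head_minimal hu hufin
        have hcF : c ∈ F := by
          rw [← hufin]; simp
        have hcms : c ∈ ms := by
          rw [hmsmem, hminsdef, Finset.mem_filter]
          exact ⟨hcF, hcmin⟩
        exact hg3 (c :: y) c hu hufin hulen rfl hcms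
    · -- interval condition
      intro L₁ p L₂ hsplit x hx
      have := hg4 L₁ p L₂ hsplit x hx
      simpa using this

end Level



section Main
variable {S : Type*} [DecidableEq S] [PartialOrder S]

/-- The complex of admissible words with content in `Δ`. -/
def GSet (Δ : Set (Finset S)) : Set (IWord S) :=
  {w | w.toList.Nodup ∧ w.toList.toFinset ∈ Δ ∧
    w.toList.Pairwise fun a b => ¬ b < a}

theorem mem_GSet {Δ : Set (Finset S)} {w : IWord S} :
    w ∈ GSet Δ ↔ Adm w.toList ∧ w.toList.toFinset ∈ Δ := by
  constructor
  · rintro ⟨h1, h2, h3⟩; exact ⟨⟨h1, h3⟩, h2⟩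
  · rintro ⟨⟨h1, h3⟩, h2⟩; exact ⟨h1, h2, h3⟩

theorem iword_le_iff {v w : IWord S} : v ≤ w ↔ v.toList <+ w.toList := Iff.rfl

theorem iword_rigid : ∀ x y : IWord S, x ≤ y →
    (fun w : IWord S => w.toList.length) x = (fun w : IWord S => w.toList.length) y → x = y :=
  fun _ _ hxy hlen => List.Sublist.eq_of_length hxy hlen

/-- The case of a full simplex. -/
theorem gamma_iic (t : Finset S) :
    Shellable (fun w : IWord S => w.toList.length) (GSet (Set.Iic t)) := by
  classical
  obtain ⟨hne, hmem, hcomp, hint, -⟩ :=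
    (level_list t.card t ∅ rfl (Finset.empty_subset t)).choose_spec
  set L := (level_list t.card t ∅ rfl (Finset.empty_subset t)).choose with hL
  have key := shellable_of_list (α := IWord S) (rk := fun w => w.toList.length)
    ∅ t.card iword_rigid
    (fun x y _ hy => absurd hy (Set.notMem_empty y))
    (fun m hm => absurd hm.1 (Set.notMem_empty m))
    (fun h => absurd h (Set.not_nonempty_empty))
    L (fun _ => hne)
    (fun p hp => ⟨(hmem p hp).2.2.2, (hmem p hp).2.2.1⟩)
    (by
      intro L₁ p L₂ hsplit x hx
      have h := hint L₁ p L₂ hsplit x.toList hx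
      simp only [Finset.empty_subset, true_and] at h
      constructor
      · rintro (h' | ⟨q, hq, hxq⟩) hpx
        · exact absurd h' (Set.notMem_empty _)
        · exact (h.2 hpx) q hq hxq
      · intro hnpx
        by_contra hcon
        push_neg at hcon
        exact hnpx (h.1 (fun q hq hxq => hcon.2 q hq hxq)))
  have hset : GSet (Set.Iic t) =
      (∅ : Set (IWord S)) ∪ {x | ∃ p ∈ L, x ≤ p.1} := by
    ext w
    simp only [Set.empty_union, Set.mem_setOf_eq, mem_GSet]
    constructor
    · rintro ⟨hadm, hsub⟩
      obtain ⟨u, hu1, hu2, hu3, hu4⟩ := adm_cover hadm hsub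
      obtain ⟨p, hp, hpu⟩ := hcomp u hu1 hu2 hu3
      exact ⟨p, hp, show w.toList <+ p.1 by rw [hpu]; exact hu4⟩
    · rintro ⟨p, hp, hxp⟩
      obtain ⟨hadm, hfin, -, -⟩ := hmem p hp
      refine ⟨Adm.sublist hxp hadm, ?_⟩
      rw [Set.mem_Iic, ← hfin]
      exact sub_toFinset_subset hxp
  rw [hset]
  exact key

/-- Main auxiliary theorem, by induction on the shelling of `Δ`. -/
theorem gamma_aux : ∀ (Δ : Set (Finset S)), Shellable Finset.card Δ → Δ.Finite →
    (∀ σ ∈ Δ, ∀ τ ⊆ σ, τ ∈ Δ) →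
    Shellable (fun w : IWord S => w.toList.length) (GSet Δ) := by
  intro Δ hshell
  induction hshell with
  | simplex t =>
    intro _ _
    exact gamma_iic t
  | step Δ s t hs hst hmax huniq hpure hrec IH =>
    intro hfin hdown
    classical
    set Δ' : Set (Finset S) := {x ∈ Δ | ¬ s ⊆ x} with hΔ'def
    have hΔ'sub : Δ' ⊆ Δ := fun x hx => hx.1
    have hfin' : Δ'.Finite := hfin.subset hΔ'sub
    have hdown' : ∀ σ ∈ Δ', ∀ τ ⊆ σ, τ ∈ Δ' := by
      rintro x ⟨hxΔ, hxs⟩ y hyx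
      exact ⟨hdown x hxΔ y hyx, fun h => hxs (h.trans hyx)⟩
    have htΔ : t ∈ Δ := hmax.1
    -- anything in Δ containing s is below t
    have hsubt : ∀ x ∈ Δ, s ⊆ x → x ⊆ t := by
      intro x hx hsx
      obtain ⟨z, hxz, hzmax⟩ := hfin.exists_le_maximal hx
      rw [← huniq z hzmax (le_trans hsx hxz)]
      exact hxz
    by_cases hc : ∃ G, Maximal (· ∈ Δ') G ∧ G ⊆ t
    · -- degenerate case : Δ is the full simplex on t
      have hiic : Δ = Set.Iic t := by
        obtain ⟨G₀, hG₀max, hG₀t⟩ := hc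
        have hG₀card : G₀.card < t.card := by
          refine Finset.card_lt_card (lt_of_le_of_ne hG₀t ?_)
          intro h
          exact hG₀max.1.2 (h ▸ hst)
        have hallmax : ∀ G, Maximal (· ∈ Δ') G → G ⊆ t := by
          intro G hGmax
          by_contra hGt
          have hGmaxΔ : Maximal (· ∈ Δ) G := by
            refine ⟨hGmax.1.1, fun y hy hGy => ?_⟩
            by_cases hsy : s ⊆ y
            · exact absurd (hGy.trans (hsubt y hy hsy)) hGt
            · exact hGmax.2 ⟨hy, hsy⟩ hGy
          have h1 : G.card = t.card := hpure G t hGmaxΔ hmax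
          have h2 : G.card = G₀.card := Shellable.pure hrec G G₀ hGmax hG₀max
          omega
        ext x
        simp only [Set.mem_Iic]
        constructor
        · intro hx
          by_cases hsx : s ⊆ x
          · exact hsubt x hx hsx
          · obtain ⟨z, hxz, hzmax⟩ := hfin'.exists_le_maximal ⟨hx, hsx⟩
            exact hxz.trans (hallmax z hzmax)
        · intro hx
          exact hdown t htΔ x hx
      rw [hiic]
      exact gamma_iic t
    · -- main case
      push_neg at hc
      obtain ⟨hne, hmem, hcomp, hint, -⟩ :=
        (level_list t.card t s rfl hst).choose_spec
      set L := (level_list t.card t s rfl hst).choose with hL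
      set Γ₀ : Set (IWord S) := GSet Δ' with hΓ₀def
      have hDC₀ : ∀ x y : IWord S, x ≤ y → y ∈ Γ₀ → x ∈ Γ₀ := by
        intro x y hxy hy
        rw [hΓ₀def, mem_GSet] at hy ⊢
        exact ⟨Adm.sublist hxy hy.1,
          hdown' _ hy.2 _ (sub_toFinset_subset hxy)⟩
      have hrk₀ : ∀ m : IWord S, Maximal (· ∈ Γ₀) m →
          (fun w : IWord S => w.toList.length) m = t.card := by
        intro m hm
        have hmG := (mem_GSet.1 hm.1)
        obtain ⟨G, hmg, hGmax⟩ := hfin'.exists_le_maximal hmG.2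
        obtain ⟨u, hu1, hu2, hu3, hu4⟩ := adm_cover hmG.1 hmg
        have huΓ₀ : (show IWord S from u) ∈ Γ₀ := by
          rw [hΓ₀def, mem_GSet]
          exact ⟨hu1, hu2 ▸ hGmax.1⟩
        have hmu : m = (u : IWord S) := le_antisymm hu4 (hm.2 huΓ₀ hu4)
        have hGmaxΔ : Maximal (· ∈ Δ) G := by
          refine ⟨hGmax.1.1, fun y hy hGy => ?_⟩
          by_cases hsy : s ⊆ y
          · exact absurd (hGy.trans (hsubt y hy hsy)) (hc G hGmax)
          · exact hGmax.2 ⟨hy, hsy⟩ hGy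
        have hGt : G.card = t.card := hpure G t hGmaxΔ hmax
        rw [hmu]
        show u.length = t.card
        rw [hu3, hGt]
      have key := shellable_of_list (α := IWord S) (rk := fun w => w.toList.length)
        Γ₀ t.card iword_rigid hDC₀ hrk₀
        (fun _ => IH hfin' hdown')
        L (fun _ => hne)
        (fun p hp => ⟨(hmem p hp).2.2.2, (hmem p hp).2.2.1⟩)
        (by
          intro L₁ p L₂ hsplit x hx
          have hpL : p ∈ L := by rw [hsplit]; exact List.mem_append.2 (Or.inr List.mem_cons_self)
          obtain ⟨hpadm, hpfin, -, -⟩ := hmem p hpL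
          have hxadm : Adm x.toList := Adm.sublist hx hpadm
          have hxt : x.toList.toFinset ⊆ t := hpfin ▸ sub_toFinset_subset hx
          have hxΔ : x.toList.toFinset ∈ Δ := hdown t htΔ _ hxt
          have hxΓ₀ : x ∈ Γ₀ ↔ ¬ s ⊆ x.toList.toFinset := by
            rw [hΓ₀def, mem_GSet]
            constructor
            · rintro ⟨-, -, h⟩; exact h
            · intro h; exact ⟨hxadm, hxΔ, h⟩
          have h := hint L₁ p L₂ hsplit x.toList hx
          rw [hxΓ₀]
          constructor
          · rintro (h' | ⟨q, hq, hxq⟩) hpx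
            · exact h' (h.2 hpx).1
            · exact (h.2 hpx).2 q hq hxq
          · intro hnpx
            by_contra hcon
            push_neg at hcon
            exact hnpx (h.1 ⟨hcon.1, fun q hq hxq => hcon.2 q hq hxq⟩))
      have hset : GSet Δ = Γ₀ ∪ {x : IWord S | ∃ p ∈ L, x ≤ p.1} := by
        ext w
        simp only [Set.mem_union, Set.mem_setOf_eq, mem_GSet]
        constructor
        · rintro ⟨hadm, hwΔ⟩
          by_cases hsw : s ⊆ w.toList.toFinset
          · obtain ⟨u, hu1, hu2, hu3, hu4⟩ := adm_cover hadm
              ((hsubt _ hwΔ hsw))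
            obtain ⟨p, hp, hpu⟩ := hcomp u hu1 hu2 hu3
            exact Or.inr ⟨p, hp, show w.toList <+ p.1 by rw [hpu]; exact hu4⟩
          · exact Or.inl (by rw [hΓ₀def, mem_GSet]; exact ⟨hadm, hwΔ, hsw⟩)
        · rintro (hw | ⟨p, hp, hxp⟩)
          · rw [hΓ₀def, mem_GSet] at hw
            exact ⟨hw.1, hΔ'sub hw.2⟩
          · obtain ⟨hpadm, hpfin, -, -⟩ := hmem p hp
            refine ⟨Adm.sublist hxp hpadm, hdown t htΔ _ ?_⟩
            rw [← hpfin]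
            exact sub_toFinset_subset hxp
      rw [hset]
      exact key

end Main

/-- If `Δ` is a finite shellable simplicial complex on `S` and `P` is a
partial order on `S`, then the Boolean cell complex `Γ(Δ,P)` of injective
words with content in `Δ` that are linear extensions of `P` restricted to
their content is shellable. -/
theorem gammaP_shellable {S : Type*} [DecidableEq S] [PartialOrder S]
    (Δ : Set (Finset S)) (hfin : Δ.Finite)
    (hdown : ∀ σ ∈ Δ, ∀ τ ⊆ σ, τ ∈ Δ)
    (hshell : Shellable Finset.card Δ) :
    Shellable (fun w : IWord S => w.toList.length)
      {w : IWord S | w.toList.Nodup ∧ w.toList.toFinset ∈ Δ ∧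
        w.toList.Pairwise fun a b => ¬ b < a} :=
  gamma_aux Δ hshell hfin hdown
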